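/- Let T ≥ 1 be an integer, ε ≥ 0, R ∈ ℝ, and δ : {0,…,T−1} → ℝ with |δ_k| ≤ ε for all k < T−1 and δ_{T−1} = R. Define Â_t = Σ_{l=0}^{T−t−1} δ_{t+l} (i.e., GAE with λ = 1) and S = −(1/T) Σ_{t=0}^{T−1} Â_t. Then |S + R| ≤ ε·(T−1)/2. -/
import Mathlib

lemma gae_sum_swap (δ : ℕ → ℝ) : ∀ T : ℕ,
    (∑ t ∈ Finset.range T, ∑ l ∈ Finset.range (T - t), δ (t + l))
      = ∑ k ∈ Finset.range T, ((k : ℝ) + 1) * δ k := by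
  intro T
  induction T with
  | zero => simp
  | succ T ih =>
    have h1 : ∀ t ∈ Finset.range (T + 1),
        (∑ l ∈ Finset.range (T + 1 - t), δ (t + l))
          = (∑ l ∈ Finset.range (T - t), δ (t + l)) + δ T := by
      intro t ht
      have ht' : t ≤ T := Nat.lt_succ_iff.mp (Finset.mem_range.mp ht)
      have h2 : T + 1 - t = (T - t) + 1 := by omega
      have h3 : t + (T - t) = T := by omega
      rw [h2, Finset.sum_range_succ, h3]
    rw [Finset.sum_congr rfl h1, Finset.sum_add_distrib, Finset.sum_range_succ,
      Nat.sub_self, Finset.sum_range_zero, add_zero, ih, Finset.sum_range_succ,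
      Finset.sum_const, Finset.card_range, nsmul_eq_mul]
    push_cast
    rw [Finset.sum_range_succ]
    push_cast
    ring

lemma gauss_one (n : ℕ) :
    (∑ k ∈ Finset.range n, ((k : ℝ) + 1)) = (n : ℝ) * ((n : ℝ) + 1) / 2 := by
  induction n with
  | zero => simp
  | succ m ih =>
    rw [Finset.sum_range_succ, ih]
    push_cast
    ring

/-- PPO loss under GAE, case `λ = 1`: the unweighted mean advantage
`S = -(1/T) ∑_t Â_t` with `Â_t = ∑_{l=0}^{T-t-1} δ_{t+l}` satisfies
`|S + R| ≤ ε (T-1) / 2`. -/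
theorem ppo_mean_advantage_lambda_eq_one (T : ℕ) (hT : 1 ≤ T) (ε R : ℝ)
    (hε : 0 ≤ ε) (δ : ℕ → ℝ)
    (hδ : ∀ k, k < T - 1 → |δ k| ≤ ε) (hR : δ (T - 1) = R)
    (A : ℕ → ℝ) (hA : ∀ t, A t = ∑ l ∈ Finset.range (T - t), δ (t + l))
    (S : ℝ) (hS : S = -(1 / (T : ℝ)) * ∑ t ∈ Finset.range T, A t) :
    |S + R| ≤ ε * ((T : ℝ) - 1) / 2 := by
  obtain ⟨n, rfl⟩ : ∃ n, T = n + 1 := ⟨T - 1, by omega⟩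
  simp only [Nat.add_sub_cancel] at hδ hR
  have hTpos : (0 : ℝ) < (n : ℝ) + 1 := by positivity
  have hsum : (∑ t ∈ Finset.range (n + 1), A t)
      = (∑ k ∈ Finset.range n, ((k : ℝ) + 1) * δ k) + ((n : ℝ) + 1) * R := by
    rw [Finset.sum_congr rfl (fun t _ => hA t), gae_sum_swap, Finset.sum_range_succ, hR]
  have key : S + R = -(1 / ((n : ℝ) + 1)) * ∑ k ∈ Finset.range n, ((k : ℝ) + 1) * δ k := by
    rw [hS, hsum]
    push_cast
    field_simp
    ring
  have hcast : ((n : ℝ) + 1 : ℝ) = ((n + 1 : ℕ) : ℝ) := by push_cast; ring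
  rw [show ((n + 1 : ℕ) : ℝ) = (n : ℝ) + 1 by push_cast; ring] at *
  rw [key, abs_mul, abs_neg, abs_of_pos (by positivity : (0:ℝ) < 1 / ((n:ℝ) + 1))]
  have hbound : |∑ k ∈ Finset.range n, ((k : ℝ) + 1) * δ k|
      ≤ ∑ k ∈ Finset.range n, ((k : ℝ) + 1) * ε := by
    refine (Finset.abs_sum_le_sum_abs _ _).trans (Finset.sum_le_sum fun k hk => ?_)
    rw [abs_mul, abs_of_nonneg (by positivity : (0:ℝ) ≤ (k:ℝ) + 1)]
    exact mul_le_mul_of_nonneg_left (hδ k (Finset.mem_range.mp hk)) (by positivity)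
  have hgauss := gauss_one n
  have h1 : (∑ k ∈ Finset.range n, ((k : ℝ) + 1) * ε)
      = (n : ℝ) * ((n : ℝ) + 1) / 2 * ε := by
    rw [← Finset.sum_mul, hgauss]
  calc 1 / ((n:ℝ) + 1) * |∑ k ∈ Finset.range n, ((k : ℝ) + 1) * δ k|
      ≤ 1 / ((n:ℝ) + 1) * ((n : ℝ) * ((n : ℝ) + 1) / 2 * ε) := by
        exact mul_le_mul_of_nonneg_left (hbound.trans_eq h1) (by positivity)
    _ = ε * (((n:ℝ) + 1) - 1) / 2 := by field_simp; ring
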